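/- arXiv:1612.04058 — 2 statements merged into one kernel-verified Lean document; each statement's English description precedes it below -/
import Mathlib

section
/- Fix an integer M ≥ 1, reals 0 < γ_b < γ_t < 1, w ∈ (0,1), Ae > 0, and a detection threshold z_th with 0 < z_th < Ae. Define t₀(σ,σ₀) = (1−γ_b)·Q(√M·z_th/σ₀) + γ_b·Q((z_th−Ae)/√(σ₀²/M+σ²)) and t₁(σ,σ₀) = (1−γ_t)·Q(√M·z_th/σ₀) + γ_t·Q((z_th−Ae)/√(σ₀²/M+σ²)). Then as (σ, σ₀) → (0⁺, 0⁺), the gap C_M(γ_b, γ_t, w) − C_M(t₀(σ,σ₀), t₁(σ,σ₀), w) tends to 0 (asymptotic tightness of the vector transmission-rate bounds, Theorem 3). -/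
set_option maxHeartbeats 1000000


open MeasureTheory Filter Real

/-- The Gaussian tail function `Q(x) = ∫_x^∞ (1/√(2π)) e^{−u²/2} du`. -/
noncomputable def gaussQ (x : ℝ) : ℝ :=
  ∫ u in Set.Ioi x, (Real.sqrt (2 * Real.pi))⁻¹ * Real.exp (-u ^ 2 / 2)

/-- Binary entropy function. -/
noncomputable def H2 (x : ℝ) : ℝ := -x * Real.log x - (1 - x) * Real.log (1 - x)

/-- Hamming weight of a binary vector. -/
def hammingWt {M : ℕ} (y : Fin M → Bool) : ℕ :=
  (Finset.univ.filter fun i => y i = true).card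

/-- Product Bernoulli probability of the binary vector `y` with parameter `p`. -/
noncomputable def bernVec (M : ℕ) (p : ℝ) (y : Fin M → Bool) : ℝ :=
  p ^ hammingWt y * (1 - p) ^ (M - hammingWt y)

/-- The `M`-interval mutual information of the binary asymmetric vector channel. -/
noncomputable def CM (M : ℕ) (p01 p11 w : ℝ) : ℝ :=
  (∑ y : Fin M → Bool,
      Real.negMulLog ((1 - w) * bernVec M p01 y + w * bernVec M p11 y)) -
    M * (w * H2 p11 + (1 - w) * H2 p01)

lemma gauss_integrable :
    Integrable (fun u : ℝ => (Real.sqrt (2 * Real.pi))⁻¹ * Real.exp (-u ^ 2 / 2)) := by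
  have : ∀ u : ℝ, -u ^ 2 / 2 = -((1:ℝ)/2) * u ^ 2 := fun u => by ring
  simp_rw [this]
  exact (integrable_exp_neg_mul_sq (by norm_num)).const_mul _

lemma gauss_total : ∫ u : ℝ, (Real.sqrt (2 * Real.pi))⁻¹ * Real.exp (-u ^ 2 / 2) = 1 := by
  rw [integral_const_mul]
  have : ∀ u : ℝ, -u ^ 2 / 2 = -((1:ℝ)/2) * u ^ 2 := fun u => by ring
  simp_rw [this, integral_gaussian]
  rw [show (π / (1/2) : ℝ) = 2 * π by ring, inv_mul_cancel₀ (by positivity)]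

lemma gaussQ_indicator (x : ℝ) :
    gaussQ x = ∫ u : ℝ, (Set.Ioi x).indicator
      (fun u => (Real.sqrt (2 * Real.pi))⁻¹ * Real.exp (-u ^ 2 / 2)) u := by
  rw [gaussQ, integral_indicator measurableSet_Ioi]

lemma gaussQ_atBot : Tendsto gaussQ atBot (nhds 1) := by
  rw [← gauss_total]
  apply Tendsto.congr (fun x => (gaussQ_indicator x).symm)
  apply tendsto_integral_filter_of_dominated_convergence
    (fun u => (Real.sqrt (2 * Real.pi))⁻¹ * Real.exp (-u ^ 2 / 2))
  · filter_upwards with x using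
      (gauss_integrable.aestronglyMeasurable.indicator measurableSet_Ioi)
  · filter_upwards with x
    filter_upwards with u
    rw [norm_indicator_eq_indicator_norm]
    refine (Set.indicator_le_self' (fun _ _ => norm_nonneg _) u).trans ?_
    rw [Real.norm_of_nonneg (by positivity)]
  · exact gauss_integrable
  · filter_upwards with u
    apply Tendsto.congr' _ tendsto_const_nhds
    filter_upwards [eventually_lt_atBot u] with x hx
    rw [Set.indicator_of_mem (Set.mem_Ioi.mpr hx)]

lemma gaussQ_atTop : Tendsto gaussQ atTop (nhds 0) := by
  apply Tendsto.congr (fun x => (gaussQ_indicator x).symm)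
  have := tendsto_integral_filter_of_dominated_convergence
    (μ := (volume : Measure ℝ)) (l := (atTop : Filter ℝ))
    (F := fun x => (Set.Ioi x).indicator
      (fun u : ℝ => (Real.sqrt (2 * Real.pi))⁻¹ * Real.exp (-u ^ 2 / 2)))
    (f := fun _ : ℝ => (0:ℝ))
    (fun u => (Real.sqrt (2 * Real.pi))⁻¹ * Real.exp (-u ^ 2 / 2))
    ?_ ?_ ?_ ?_
  · simpa using this
  · filter_upwards with x using
      (gauss_integrable.aestronglyMeasurable.indicator measurableSet_Ioi)
  · filter_upwards with x
    filter_upwards with u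
    rw [norm_indicator_eq_indicator_norm]
    refine (Set.indicator_le_self' (fun _ _ => norm_nonneg _) u).trans ?_
    rw [Real.norm_of_nonneg (by positivity)]
  · exact gauss_integrable
  · filter_upwards with u
    apply Tendsto.congr' _ tendsto_const_nhds
    filter_upwards [eventually_ge_atTop u] with x hx
    rw [Set.indicator_of_notMem (by simp [Set.mem_Ioi]; exact hx)]

lemma H2_eq (x : ℝ) : H2 x = Real.negMulLog x + Real.negMulLog (1 - x) := by
  simp [H2, Real.negMulLog]; ring

lemma continuous_H2 : Continuous H2 := by
  have : H2 = fun x => Real.negMulLog x + Real.negMulLog (1 - x) := funext H2_eq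
  rw [this]; fun_prop

lemma continuous_CM (M : ℕ) (w : ℝ) :
    Continuous (fun q : ℝ × ℝ => CM M q.1 q.2 w) := by
  unfold CM bernVec
  apply Continuous.sub
  · apply continuous_finset_sum
    intro y _
    exact Real.continuous_negMulLog.comp (by fun_prop)
  · have := continuous_H2
    fun_prop

theorem stmt_5 (M : ℕ) (hM : 1 ≤ M) (γb γt w Ae zth : ℝ)
    (hγb : 0 < γb) (hγbt : γb < γt) (hγt : γt < 1)
    (hw : w ∈ Set.Ioo (0 : ℝ) 1) (hAe : 0 < Ae)
    (hz1 : 0 < zth) (hz2 : zth < Ae) :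
    Tendsto (fun p : ℝ × ℝ =>
        CM M γb γt w -
          CM M
            ((1 - γb) * gaussQ (Real.sqrt M * zth / p.2) +
              γb * gaussQ ((zth - Ae) / Real.sqrt (p.2 ^ 2 / M + p.1 ^ 2)))
            ((1 - γt) * gaussQ (Real.sqrt M * zth / p.2) +
              γt * gaussQ ((zth - Ae) / Real.sqrt (p.2 ^ 2 / M + p.1 ^ 2)))
            w)
      ((nhdsWithin 0 (Set.Ioi 0)) ×ˢ (nhdsWithin 0 (Set.Ioi 0))) (nhds 0) := by
  set l : Filter (ℝ × ℝ) := (nhdsWithin 0 (Set.Ioi 0)) ×ˢ (nhdsWithin 0 (Set.Ioi 0)) with hl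
  have hM0 : (0:ℝ) < M := by exact_mod_cast Nat.lt_of_lt_of_le Nat.zero_lt_one hM
  have hfst : Tendsto (fun p : ℝ × ℝ => p.1) l (nhdsWithin 0 (Set.Ioi 0)) := tendsto_fst
  have hsnd : Tendsto (fun p : ℝ × ℝ => p.2) l (nhdsWithin 0 (Set.Ioi 0)) := tendsto_snd
  -- first argument tends to atTop
  have hA : Tendsto (fun p : ℝ × ℝ => Real.sqrt M * zth / p.2) l atTop := by
    have hc : 0 < Real.sqrt M * zth := by positivity
    have hinv : Tendsto (fun p : ℝ × ℝ => (p.2)⁻¹) l atTop :=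
      hsnd.inv_tendsto_nhdsGT_zero
    simpa [div_eq_mul_inv] using hinv.const_mul_atTop hc
  -- denominator of second argument tends to 0 within Ioi 0
  have hD : Tendsto (fun p : ℝ × ℝ => Real.sqrt (p.2 ^ 2 / M + p.1 ^ 2)) l
      (nhdsWithin 0 (Set.Ioi 0)) := by
    rw [tendsto_nhdsWithin_iff]
    constructor
    · have h1 : Tendsto (fun p : ℝ × ℝ => p.1) l (nhds 0) := hfst.mono_right nhdsWithin_le_nhds
      have h2 : Tendsto (fun p : ℝ × ℝ => p.2) l (nhds 0) := hsnd.mono_right nhdsWithin_le_nhds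
      have : Tendsto (fun p : ℝ × ℝ => p.2 ^ 2 / M + p.1 ^ 2) l (nhds 0) := by
        have := ((h2.pow 2).div_const (M:ℝ)).add (h1.pow 2)
        simpa using this
      have := (Real.continuous_sqrt.tendsto 0).comp this
      simpa [Function.comp_def] using this
    · have h1 : ∀ᶠ p : ℝ × ℝ in l, p.1 ∈ Set.Ioi (0:ℝ) :=
        hfst.eventually eventually_mem_nhdsWithin
      filter_upwards [h1] with p hp
      have hp1 : 0 < p.1 := hp
      have h2 : (0:ℝ) ≤ p.2 ^ 2 / M := div_nonneg (sq_nonneg _) (le_of_lt hM0)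
      have : (0:ℝ) < p.2 ^ 2 / M + p.1 ^ 2 := by nlinarith
      exact Set.mem_Ioi.mpr (Real.sqrt_pos.mpr this)
  have hB : Tendsto (fun p : ℝ × ℝ => (zth - Ae) / Real.sqrt (p.2 ^ 2 / M + p.1 ^ 2)) l atBot := by
    have hinv : Tendsto (fun p : ℝ × ℝ => (Real.sqrt (p.2 ^ 2 / M + p.1 ^ 2))⁻¹) l atTop :=
      hD.inv_tendsto_nhdsGT_zero
    have hc : zth - Ae < 0 := by linarith
    simpa [div_eq_mul_inv] using hinv.const_mul_atTop_of_neg hc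
  have hQA : Tendsto (fun p : ℝ × ℝ => gaussQ (Real.sqrt M * zth / p.2)) l (nhds 0) :=
    gaussQ_atTop.comp hA
  have hQB : Tendsto (fun p : ℝ × ℝ =>
      gaussQ ((zth - Ae) / Real.sqrt (p.2 ^ 2 / M + p.1 ^ 2))) l (nhds 1) :=
    gaussQ_atBot.comp hB
  have ht0 : Tendsto (fun p : ℝ × ℝ =>
      (1 - γb) * gaussQ (Real.sqrt M * zth / p.2) +
        γb * gaussQ ((zth - Ae) / Real.sqrt (p.2 ^ 2 / M + p.1 ^ 2))) l (nhds γb) := by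
    have := (hQA.const_mul (1 - γb)).add (hQB.const_mul γb)
    simpa using this
  have ht1 : Tendsto (fun p : ℝ × ℝ =>
      (1 - γt) * gaussQ (Real.sqrt M * zth / p.2) +
        γt * gaussQ ((zth - Ae) / Real.sqrt (p.2 ^ 2 / M + p.1 ^ 2))) l (nhds γt) := by
    have := (hQA.const_mul (1 - γt)).add (hQB.const_mul γt)
    simpa using this
  have hCM : Tendsto (fun p : ℝ × ℝ =>
      CM M
        ((1 - γb) * gaussQ (Real.sqrt M * zth / p.2) +
          γb * gaussQ ((zth - Ae) / Real.sqrt (p.2 ^ 2 / M + p.1 ^ 2)))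
        ((1 - γt) * gaussQ (Real.sqrt M * zth / p.2) +
          γt * gaussQ ((zth - Ae) / Real.sqrt (p.2 ^ 2 / M + p.1 ^ 2)))
        w) l (nhds (CM M γb γt w)) := by
    have hc := (continuous_CM M w).continuousAt (x := (γb, γt))
    have hcomp := hc.tendsto.comp (ht0.prodMk_nhds ht1)
    simpa [Function.comp_def] using hcomp
  have := tendsto_const_nhds (x := CM M γb γt w) (f := l) |>.sub hCM
  simpa using this
end

section
/- Let 0 < γ_b < γ_t < 1 and Ae > 0. There exist constants C_l, C_u > 0 depending only on γ_b and γ_t (independent of σ and σ₀) such that for all σ, σ₀ > 0 for which Z(C_l) and Z(C_u) are well defined (the expressions under the square roots nonnegative) and lie in [0, Ae], every maximizer ẑ ∈ [0, Ae] of the map z ↦ min{ D(p₀(z) ‖ p₁(z)), D(p₁(z) ‖ p₀(z)) } satisfies Z(C_l) ≤ ẑ ≤ Z(C_u) (Theorem 6). -/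
open MeasureTheory Real

/-- Kullback-Leibler distance between `Bernoulli p` and `Bernoulli q`. -/
noncomputable def klBer (p q : ℝ) : ℝ :=
  p * Real.log (p / q) + (1 - p) * Real.log ((1 - p) / (1 - q))

/-- The localizing threshold value `Z(C)` of Theorem 6. -/
noncomputable def Zfun (Ae σ σ0 C : ℝ) : ℝ :=
  (-(Ae / (σ ^ 2 + σ0 ^ 2)) +
      Real.sqrt (Ae ^ 2 / (σ ^ 2 + σ0 ^ 2) ^ 2 -
        (1 / (σ ^ 2 + σ0 ^ 2) - 1 / σ0 ^ 2) *
          (Ae ^ 2 / (σ ^ 2 + σ0 ^ 2) -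
            2 * Real.log (C * σ0 / Real.sqrt (σ ^ 2 + σ0 ^ 2))))) /
    (1 / σ0 ^ 2 - 1 / (σ ^ 2 + σ0 ^ 2))

/-- The radicand appearing in `Zfun`. -/
noncomputable def Zrad (Ae σ σ0 C : ℝ) : ℝ :=
  Ae ^ 2 / (σ ^ 2 + σ0 ^ 2) ^ 2 -
    (1 / (σ ^ 2 + σ0 ^ 2) - 1 / σ0 ^ 2) *
      (Ae ^ 2 / (σ ^ 2 + σ0 ^ 2) -
        2 * Real.log (C * σ0 / Real.sqrt (σ ^ 2 + σ0 ^ 2)))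

/-- Threshold-exceedance probability under photoelectron probability `γ`. -/
noncomputable def pCross (γ Ae σ0 σ z : ℝ) : ℝ :=
  (1 - γ) * gaussQ (z / σ0) + γ * gaussQ ((z - Ae) / Real.sqrt (σ0 ^ 2 + σ ^ 2))


set_option maxHeartbeats 1000000

open Set
noncomputable def gpdf (u : ℝ) : ℝ := (Real.sqrt (2 * Real.pi))⁻¹ * Real.exp (-u ^ 2 / 2)

lemma gaussQ_eq_int (x : ℝ) : gaussQ x = ∫ u in Set.Ioi x, gpdf u := rfl

lemma gpdf_pos (u : ℝ) : 0 < gpdf u :=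
  mul_pos (inv_pos.2 (Real.sqrt_pos.2 (by positivity))) (Real.exp_pos _)

lemma gpdf_cont : Continuous gpdf := by
  unfold gpdf
  fun_prop

lemma gpdf_integrable : Integrable gpdf := by
  have h := (integrable_exp_neg_mul_sq (b := (1:ℝ)/2) (by norm_num)).const_mul
      (Real.sqrt (2 * Real.pi))⁻¹
  have : gpdf = fun u => (Real.sqrt (2*Real.pi))⁻¹ * Real.exp (-(1/2) * u^2) := by
    funext u; unfold gpdf; congr 1; ring
  rw [this]; exact h

lemma gpdf_total : ∫ u, gpdf u = 1 := by
  have h : ∫ u : ℝ, Real.exp (-(1/2 : ℝ) * u^2) = Real.sqrt (Real.pi / (1/2)) :=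
    integral_gaussian (1/2)
  have h2 : gpdf = fun u => (Real.sqrt (2*Real.pi))⁻¹ * Real.exp (-(1/2) * u^2) := by
    funext u; unfold gpdf; congr 1; ring
  rw [h2, MeasureTheory.integral_const_mul, h]
  rw [show Real.pi / (1/2 : ℝ) = 2 * Real.pi by ring]
  rw [inv_mul_cancel₀ (by positivity)]

lemma gaussQ_pos (x : ℝ) : 0 < gaussQ x := by
  rw [gaussQ_eq_int]
  rw [setIntegral_pos_iff_support_of_nonneg_ae
    (Filter.Eventually.of_forall fun u => (gpdf_pos u).le) gpdf_integrable.integrableOn]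
  have : Function.support gpdf = Set.univ := by
    ext u; simp [Function.mem_support, (gpdf_pos u).ne']
  rw [this, Set.univ_inter]
  simp [Real.volume_Ioi]

lemma gaussQ_sub (x y : ℝ) (h : x ≤ y) :
    gaussQ x = (∫ u in Set.Ioc x y, gpdf u) + gaussQ y := by
  rw [gaussQ_eq_int, gaussQ_eq_int, ← setIntegral_union (Set.Ioc_disjoint_Ioi le_rfl)
    measurableSet_Ioi gpdf_integrable.integrableOn gpdf_integrable.integrableOn,
    Set.Ioc_union_Ioi_eq_Ioi h]

lemma gaussQ_int_Ioc_pos (x y : ℝ) (h : x < y) : 0 < ∫ u in Set.Ioc x y, gpdf u := by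
  rw [setIntegral_pos_iff_support_of_nonneg_ae
    (Filter.Eventually.of_forall fun u => (gpdf_pos u).le) gpdf_integrable.integrableOn]
  have : Function.support gpdf = Set.univ := by
    ext u; simp [Function.mem_support, (gpdf_pos u).ne']
  rw [this, Set.univ_inter]
  rw [Real.volume_Ioc]
  simp [h]

lemma gaussQ_strict_anti {x y : ℝ} (h : x < y) : gaussQ y < gaussQ x := by
  rw [gaussQ_sub x y h.le]
  linarith [gaussQ_int_Ioc_pos x y h]

lemma gaussQ_anti {x y : ℝ} (h : x ≤ y) : gaussQ y ≤ gaussQ x := by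
  rcases eq_or_lt_of_le h with rfl | h
  · exact le_rfl
  · exact (gaussQ_strict_anti h).le

lemma gaussQ_add_compl (x : ℝ) : (∫ u in Set.Iic x, gpdf u) + gaussQ x = 1 := by
  rw [gaussQ_eq_int, intervalIntegral.integral_Iic_add_Ioi gpdf_integrable.integrableOn
    gpdf_integrable.integrableOn, gpdf_total]

lemma gaussQ_lt_one (x : ℝ) : gaussQ x < 1 := by
  have h := gaussQ_add_compl x
  have h2 : 0 < ∫ u in Set.Iic x, gpdf u := by
    have := gaussQ_int_Ioc_pos (x-1) x (by linarith)
    have hsub : (∫ u in Set.Ioc (x-1) x, gpdf u) ≤ ∫ u in Set.Iic x, gpdf u := by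
      apply setIntegral_mono_set gpdf_integrable.integrableOn
        (Filter.Eventually.of_forall fun u => (gpdf_pos u).le)
      exact Filter.Eventually.of_forall fun u hu => hu.2
    linarith
  linarith

lemma gaussQ_zero : gaussQ 0 = 1/2 := by
  have h := gaussQ_add_compl 0
  have h2 : (∫ u in Set.Iic (0:ℝ), gpdf u) = gaussQ 0 := by
    rw [gaussQ_eq_int]
    have : (∫ u in Set.Ioi (0:ℝ), gpdf (-u)) = ∫ u in Set.Iic (-(0:ℝ)), gpdf u :=
      integral_comp_neg_Ioi 0 gpdf
    have heven : ∀ u : ℝ, gpdf (-u) = gpdf u := by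
      intro u; unfold gpdf; congr 2; ring
    simp only [heven, neg_zero] at this
    exact this.symm
  rw [h2] at h; linarith

lemma gaussQ_le_half {x : ℝ} (h : 0 ≤ x) : gaussQ x ≤ 1/2 := by
  rw [← gaussQ_zero]; exact gaussQ_anti h

lemma half_le_gaussQ {x : ℝ} (h : x ≤ 0) : 1/2 ≤ gaussQ x := by
  rw [← gaussQ_zero]; exact gaussQ_anti h

lemma gaussQ_hasDerivAt (x : ℝ) : HasDerivAt gaussQ (-gpdf x) x := by
  have key : ∀ y : ℝ, gaussQ y = gaussQ 0 - ∫ t in (0:ℝ)..y, gpdf t := by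
    intro y
    rcases le_or_gt 0 y with h | h
    · rw [intervalIntegral.integral_of_le h]
      have := gaussQ_sub 0 y h
      linarith
    · rw [intervalIntegral.integral_symm, intervalIntegral.integral_of_le h.le]
      have := gaussQ_sub y 0 h.le
      linarith
  have hF : HasDerivAt (fun u => ∫ t in (0:ℝ)..u, gpdf t) (gpdf x) x := by
    apply intervalIntegral.integral_hasDerivAt_right
      (gpdf_integrable.intervalIntegrable)
      (gpdf_cont.stronglyMeasurableAtFilter _ _)
      gpdf_cont.continuousAt
  have h2 := hF.const_sub (gaussQ 0)
  have : (fun y => gaussQ 0 - ∫ t in (0:ℝ)..y, gpdf t) = gaussQ := by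
    funext y; rw [key y]
  rw [this] at h2
  convert h2 using 1

lemma corePos (γb γt α β p0 p1 L1 L2 : ℝ)
    (hγb : 0 < γb) (hbt : γb < γt) (hγt : γt < 1) (hα : 0 < α) (hβ : 0 < β)
    (hp0 : γb/2 ≤ p0) (hp1 : γt/2 ≤ p1) (hp1u : p1 ≤ (1+γt)/2)
    (hδ : 0 < p1 - p0)
    (hF3 : (p1-p0)*(1-γt) ≤ (γt-γb)*(1-p1))
    (hL1 : (p1-p0)/p1 ≤ L1) (hL2 : (p1-p0)/(1-p0) ≤ L2)
    (hL1u : L1 ≤ (p1-p0)/p0) (hL2u : L2 ≤ (p1-p0)/(1-p1))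
    (hK : (2-γt+γt^2)/(1-γt)^2 * β < α) :
    0 < ((1-γb)*α+γb*β) * (L1+L2) - ((1-γt)*α+γt*β) * ((p1-p0)/(p1*(1-p1)))
    ∧ 0 < ((1-γb)*α+γb*β) * ((p1-p0)/(p0*(1-p0))) - ((1-γt)*α+γt*β) * (L1+L2) := by
  have hΔ : 0 < γt - γb := by linarith
  have h1γt : 0 < 1 - γt := by linarith
  have hp0pos : 0 < p0 := lt_of_lt_of_le (by linarith) hp0
  have hp1pos : 0 < p1 := lt_of_lt_of_le (by linarith) hp1
  have h1p1 : 0 < 1 - p1 := by linarith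
  have hp01 : p0 < p1 := by linarith
  have h1p0 : 0 < 1 - p0 := by linarith
  have hWb : 0 < (1-γb)*α+γb*β :=
    add_pos (mul_pos (by linarith) hα) (mul_pos hγb hβ)
  have hWt : 0 < (1-γt)*α+γt*β :=
    add_pos (mul_pos h1γt hα) (mul_pos (by linarith) hβ)
  have hfinal : β*(2-γt+γt^2) < α*(1-γt)^2 := by
    rw [div_mul_eq_mul_div, div_lt_iff₀ (by nlinarith [sq_nonneg (1-γt)])] at hK
    linarith
  have hαβ : β < α := by nlinarith [mul_pos hβ (show (0:ℝ) < 1+γt by linarith)]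
  have hmain : ((1-γt)*α+γt*β)*(1+γt) < (α-β)*(1-γt)*2 := by nlinarith [hfinal]
  have e2 : ((1-γt)*α+γt*β)*p1 ≤ ((1-γt)*α+γt*β)*((1+γt)/2) :=
    mul_le_mul_of_nonneg_left hp1u hWt.le
  have e3 : (α-β)*(1-γt) ≤ (α-β)*(1-γt)*(1-p0+p1) :=
    le_mul_of_one_le_right (mul_nonneg (by linarith) h1γt.le) (by linarith)
  have hstep : ((1-γt)*α+γt*β)*p1 < (α-β)*(1-γt)*(1-p0+p1) := by linarith
  have e1 : ((1-γt)*α+γt*β)*p1*((p1-p0)*(1-γt)) ≤ ((1-γt)*α+γt*β)*p1*((γt-γb)*(1-p1)) :=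
    mul_le_mul_of_nonneg_left hF3 (by positivity)
  have hkey1 : 0 < ((1-γb)*α+γb*β)*(1-p1)*(1-p0+p1) - ((1-γt)*α+γt*β)*(1-p0) := by
    have hid : ((1-γb)*α+γb*β)*(1-p1)*(1-p0+p1) - ((1-γt)*α+γt*β)*(1-p0)
        = (γt-γb)*(α-β)*(1-p1)*(1-p0+p1) - ((1-γt)*α+γt*β)*p1*(p1-p0) := by ring
    rw [hid]
    have h4 : ((1-γt)*α+γt*β)*p1*((γt-γb)*(1-p1)) < (α-β)*(1-γt)*(1-p0+p1)*((γt-γb)*(1-p1)) :=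
      mul_lt_mul_of_pos_right hstep (by positivity)
    nlinarith [e1, h4]
  have hkey2 : 0 < ((1-γb)*α+γb*β)*(1-p1) - ((1-γt)*α+γt*β)*(1-p0)*(1-p1+p0) := by
    have hid : ((1-γb)*α+γb*β)*(1-p1) - ((1-γt)*α+γt*β)*(1-p0)*(1-p1+p0)
        = (γt-γb)*(α-β)*(1-p1) - ((1-γt)*α+γt*β)*p0*(p1-p0) := by ring
    rw [hid]
    have e1' : ((1-γt)*α+γt*β)*p0*((p1-p0)*(1-γt)) ≤ ((1-γt)*α+γt*β)*p0*((γt-γb)*(1-p1)) :=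
      mul_le_mul_of_nonneg_left hF3 (by positivity)
    have e2' : ((1-γt)*α+γt*β)*p0 ≤ ((1-γt)*α+γt*β)*((1+γt)/2) :=
      mul_le_mul_of_nonneg_left (by linarith) hWt.le
    have hstep' : ((1-γt)*α+γt*β)*p0 < (α-β)*(1-γt) := by linarith
    have h4 : ((1-γt)*α+γt*β)*p0*((γt-γb)*(1-p1)) < (α-β)*(1-γt)*((γt-γb)*(1-p1)) :=
      mul_lt_mul_of_pos_right hstep' (by positivity)
    nlinarith [e1', h4]
  constructor
  · have hlow : ((1-γb)*α+γb*β)*((p1-p0)/p1 + (p1-p0)/(1-p0)) ≤ ((1-γb)*α+γb*β)*(L1+L2) :=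
      mul_le_mul_of_nonneg_left (by linarith) hWb.le
    have hident : ((1-γb)*α+γb*β)*((p1-p0)/p1 + (p1-p0)/(1-p0))
        - ((1-γt)*α+γt*β) * ((p1-p0)/(p1*(1-p1)))
        = ((p1-p0)*(((1-γb)*α+γb*β)*(1-p1)*(1-p0+p1) - ((1-γt)*α+γt*β)*(1-p0)))
          / (p1*(1-p0)*(1-p1)) := by
      field_simp
    have hpos : 0 < ((p1-p0)*(((1-γb)*α+γb*β)*(1-p1)*(1-p0+p1) - ((1-γt)*α+γt*β)*(1-p0)))
          / (p1*(1-p0)*(1-p1)) :=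
      div_pos (mul_pos hδ hkey1) (by positivity)
    linarith [hident ▸ hpos]
  · have hup : ((1-γt)*α+γt*β)*(L1+L2) ≤ ((1-γt)*α+γt*β)*((p1-p0)/p0 + (p1-p0)/(1-p1)) :=
      mul_le_mul_of_nonneg_left (by linarith) hWt.le
    have hident : ((1-γb)*α+γb*β)*((p1-p0)/(p0*(1-p0)))
        - ((1-γt)*α+γt*β)*((p1-p0)/p0 + (p1-p0)/(1-p1))
        = ((p1-p0)*(((1-γb)*α+γb*β)*(1-p1) - ((1-γt)*α+γt*β)*(1-p0)*(1-p1+p0)))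
          / (p0*(1-p0)*(1-p1)) := by
      field_simp
    have hpos : 0 < ((p1-p0)*(((1-γb)*α+γb*β)*(1-p1) - ((1-γt)*α+γt*β)*(1-p0)*(1-p1+p0)))
          / (p0*(1-p0)*(1-p1)) :=
      div_pos (mul_pos hδ hkey2) (by positivity)
    linarith [hident ▸ hpos]

lemma coreNeg (γb γt α β p0 p1 L1 L2 : ℝ)
    (hγb : 0 < γb) (hbt : γb < γt) (hγt : γt < 1) (hα : 0 < α) (hβ : 0 < β)
    (hp0 : γb/2 ≤ p0) (hp1 : γt/2 ≤ p1) (hp1u : p1 ≤ (1+γt)/2)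
    (hδ : 0 < p1 - p0)
    (hF4 : (p1-p0)*γt ≤ (γt-γb)*p1)
    (hL1 : (p1-p0)/p1 ≤ L1) (hL2 : (p1-p0)/(1-p0) ≤ L2)
    (hL1u : L1 ≤ (p1-p0)/p0) (hL2u : L2 ≤ (p1-p0)/(1-p1))
    (hK : (2-γb+γb*γt)/(γb*γt) * α < β) :
    ((1-γb)*α+γb*β) * (L1+L2) - ((1-γt)*α+γt*β) * ((p1-p0)/(p1*(1-p1))) < 0
    ∧ ((1-γb)*α+γb*β) * ((p1-p0)/(p0*(1-p0))) - ((1-γt)*α+γt*β) * (L1+L2) < 0 := by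
  have hΔ : 0 < γt - γb := by linarith
  have h1γt : 0 < 1 - γt := by linarith
  have hγtpos : 0 < γt := by linarith
  have hp0pos : 0 < p0 := lt_of_lt_of_le (by linarith) hp0
  have hp1pos : 0 < p1 := lt_of_lt_of_le (by linarith) hp1
  have h1p1 : 0 < 1 - p1 := by linarith
  have hp01 : p0 < p1 := by linarith
  have h1p0 : 0 < 1 - p0 := by linarith
  have hWb : 0 < (1-γb)*α+γb*β :=
    add_pos (mul_pos (by linarith) hα) (mul_pos hγb hβ)
  have hWt : 0 < (1-γt)*α+γt*β :=
    add_pos (mul_pos h1γt hα) (mul_pos hγtpos hβ)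
  have hfinal : α*(2-γb+γb*γt) < β*(γb*γt) := by
    rw [div_mul_eq_mul_div, div_lt_iff₀ (by positivity)] at hK
    linarith
  have hβα : α < β := by nlinarith [mul_pos hα (show (0:ℝ) < 2-γb+γb*γt-γb*γt by linarith)]
  -- main scalar inequality : 2γt(β-α) > (2-γb) Wt
  have hmain : ((1-γt)*α+γt*β)*(2-γb) < (β-α)*γt*2 := by nlinarith [hfinal]
  -- (2-γb) p0 ≥ γb (1-p1), since p0 ≥ γb/2 and 1-p1 ≤ (2-γb)/2 (as p1 ≥ γt/2 ≥ γb/2)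
  have hgeom : γb*(1-p1) ≤ (2-γb)*p0 := by nlinarith
  -- decrA key : (β-α)γt p1 (1-p1+p0) Δ > Wt (p1-p0)(1-p1) γt  ... final form:
  have hkey1 : ((1-γt)*α+γt*β)*p0 - ((1-γb)*α+γb*β)*p1*(1-p1+p0) > 0 := by
    have hid : ((1-γt)*α+γt*β)*p0 - ((1-γb)*α+γb*β)*p1*(1-p1+p0)
        = (γt-γb)*(β-α)*p1*(1-p1+p0) - ((1-γt)*α+γt*β)*(p1-p0)*(1-p1) := by ring
    rw [hid]
    -- step A : (β-α)γt(1-p1+p0)(2-γb) ≥ (β-α)γt*2*(1-p1)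
    have sA : (β-α)*γt*2*(1-p1) ≤ (β-α)*γt*((1-p1+p0)*(2-γb)) := by
      have : 2*(1-p1) ≤ (1-p1+p0)*(2-γb) := by nlinarith
      nlinarith [mul_pos (show (0:ℝ) < β-α by linarith) hγtpos]
    -- step B : (β-α)γt*2*(1-p1) > Wt(2-γb)(1-p1)
    have sB : ((1-γt)*α+γt*β)*(2-γb)*(1-p1) < (β-α)*γt*2*(1-p1) :=
      mul_lt_mul_of_pos_right hmain h1p1
    -- so (β-α)γt(1-p1+p0) > Wt(1-p1)   [cancel (2-γb) > 0]
    have sC : ((1-γt)*α+γt*β)*(1-p1) < (β-α)*γt*(1-p1+p0) := by nlinarith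
    -- multiply by Δ p1 > 0 and use hF4 : (p1-p0)γt ≤ Δ p1
    have sD : ((1-γt)*α+γt*β)*(1-p1)*((p1-p0)*γt) ≤ ((1-γt)*α+γt*β)*(1-p1)*((γt-γb)*p1) :=
      mul_le_mul_of_nonneg_left hF4 (by positivity)
    have sE : ((1-γt)*α+γt*β)*(1-p1)*((γt-γb)*p1) < (β-α)*γt*(1-p1+p0)*((γt-γb)*p1) :=
      mul_lt_mul_of_pos_right sC (by positivity)
    nlinarith [sD, sE]
  have hkey2 : ((1-γt)*α+γt*β)*p0*(1-p0+p1) - ((1-γb)*α+γb*β)*p1 > 0 := by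
    have hid : ((1-γt)*α+γt*β)*p0*(1-p0+p1) - ((1-γb)*α+γb*β)*p1
        = (γt-γb)*(β-α)*p1 - ((1-γt)*α+γt*β)*(p1-p0)*(1-p0) := by ring
    rw [hid]
    have sB' : ((1-γt)*α+γt*β)*(2-γb) < (β-α)*γt*2 := hmain
    have sC' : ((1-γt)*α+γt*β)*(1-p0) < (β-α)*γt := by nlinarith
    have sD' : ((1-γt)*α+γt*β)*(1-p0)*((p1-p0)*γt) ≤ ((1-γt)*α+γt*β)*(1-p0)*((γt-γb)*p1) :=
      mul_le_mul_of_nonneg_left hF4 (by positivity)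
    have sE' : ((1-γt)*α+γt*β)*(1-p0)*((γt-γb)*p1) < (β-α)*γt*((γt-γb)*p1) :=
      mul_lt_mul_of_pos_right sC' (by positivity)
    nlinarith [sD', sE']
  constructor
  · have hup : ((1-γb)*α+γb*β)*(L1+L2) ≤ ((1-γb)*α+γb*β)*((p1-p0)/p0 + (p1-p0)/(1-p1)) :=
      mul_le_mul_of_nonneg_left (by linarith) hWb.le
    have hident : ((1-γb)*α+γb*β)*((p1-p0)/p0 + (p1-p0)/(1-p1))
        - ((1-γt)*α+γt*β) * ((p1-p0)/(p1*(1-p1)))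
        = -(((p1-p0)*(((1-γt)*α+γt*β)*p0 - ((1-γb)*α+γb*β)*p1*(1-p1+p0)))
          / (p0*p1*(1-p1))) := by
      field_simp
      ring
    have hpos : 0 < ((p1-p0)*(((1-γt)*α+γt*β)*p0 - ((1-γb)*α+γb*β)*p1*(1-p1+p0)))
          / (p0*p1*(1-p1)) :=
      div_pos (mul_pos hδ hkey1) (by positivity)
    linarith [hup, hpos, hident]
  · have hlow : ((1-γt)*α+γt*β)*((p1-p0)/p1 + (p1-p0)/(1-p0)) ≤ ((1-γt)*α+γt*β)*(L1+L2) :=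
      mul_le_mul_of_nonneg_left (by linarith) hWt.le
    have hident : ((1-γb)*α+γb*β)*((p1-p0)/(p0*(1-p0)))
        - ((1-γt)*α+γt*β)*((p1-p0)/p1 + (p1-p0)/(1-p0))
        = -(((p1-p0)*(((1-γt)*α+γt*β)*p0*(1-p0+p1) - ((1-γb)*α+γb*β)*p1))
          / (p0*p1*(1-p0))) := by
      field_simp
      ring
    have hpos : 0 < ((p1-p0)*(((1-γt)*α+γt*β)*p0*(1-p0+p1) - ((1-γb)*α+γb*β)*p1))
          / (p0*p1*(1-p0)) :=
      div_pos (mul_pos hδ hkey2) (by positivity)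
    linarith [hlow, hpos, hident]

lemma logBounds {a b : ℝ} (ha : 0 < a) (hab : a < b) (hb1 : b < 1) :
    (b-a)/b ≤ Real.log b - Real.log a ∧ Real.log b - Real.log a ≤ (b-a)/a := by
  have hb : 0 < b := by linarith
  constructor
  · have h := Real.log_le_sub_one_of_pos (show 0 < a/b by positivity)
    rw [Real.log_div ha.ne' hb.ne'] at h
    have e : a/b - 1 = -((b-a)/b) := by field_simp; try ring
    linarith
  · have h := Real.log_le_sub_one_of_pos (show 0 < b/a by positivity)
    rw [Real.log_div hb.ne' ha.ne'] at h
    have e : b/a - 1 = (b-a)/a := by field_simp; try ring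
    linarith

lemma corePosD (γb γt α β p0 p1 : ℝ)
    (hγb : 0 < γb) (hbt : γb < γt) (hγt : γt < 1) (hα : 0 < α) (hβ : 0 < β)
    (hp0 : γb/2 ≤ p0) (hp1 : γt/2 ≤ p1) (hp1u : p1 ≤ (1+γt)/2)
    (hδ : 0 < p1 - p0)
    (hF3 : (p1-p0)*(1-γt) ≤ (γt-γb)*(1-p1))
    (hK : (2-γt+γt^2)/(1-γt)^2 * β < α) :
    0 < -((1-γb)*α+γb*β) * ((Real.log p0 - Real.log p1) - (Real.log (1-p0) - Real.log (1-p1)))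
        + -((1-γt)*α+γt*β) * ((p1 - p0)/(p1*(1-p1)))
    ∧ 0 < -((1-γt)*α+γt*β) * ((Real.log p1 - Real.log p0) - (Real.log (1-p1) - Real.log (1-p0)))
        + -((1-γb)*α+γb*β) * ((p0 - p1)/(p0*(1-p0))) := by
  have hp0pos : 0 < p0 := lt_of_lt_of_le (by linarith) hp0
  have hp1lt1 : p1 < 1 := by linarith
  have hp01 : p0 < p1 := by linarith
  have hlb1 := logBounds hp0pos hp01 hp1lt1
  have hlb2 := logBounds (show 0 < 1 - p1 by linarith)
    (show 1 - p1 < 1 - p0 by linarith) (show 1 - p0 < 1 by linarith)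
  have e2 : (1 - p0) - (1 - p1) = p1 - p0 := by ring
  rw [e2] at hlb2
  have hcore := corePos γb γt α β p0 p1 (Real.log p1 - Real.log p0)
    (Real.log (1-p0) - Real.log (1-p1)) hγb hbt hγt hα hβ hp0 hp1 hp1u hδ hF3
    hlb1.1 hlb2.1 hlb1.2 hlb2.2 hK
  constructor
  · have heq : ((1-γb)*α+γb*β) * ((Real.log p1 - Real.log p0) + (Real.log (1-p0) - Real.log (1-p1)))
        - ((1-γt)*α+γt*β) * ((p1-p0)/(p1*(1-p1)))
      = -((1-γb)*α+γb*β) * ((Real.log p0 - Real.log p1) - (Real.log (1-p0) - Real.log (1-p1)))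
        + -((1-γt)*α+γt*β) * ((p1 - p0)/(p1*(1-p1))) := by ring
    linarith [hcore.1, heq]
  · have heq : ((1-γb)*α+γb*β) * ((p1-p0)/(p0*(1-p0)))
        - ((1-γt)*α+γt*β) * ((Real.log p1 - Real.log p0) + (Real.log (1-p0) - Real.log (1-p1)))
      = -((1-γt)*α+γt*β) * ((Real.log p1 - Real.log p0) - (Real.log (1-p1) - Real.log (1-p0)))
        + -((1-γb)*α+γb*β) * ((p0 - p1)/(p0*(1-p0))) := by ring
    linarith [hcore.2, heq]

lemma coreNegD (γb γt α β p0 p1 : ℝ)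
    (hγb : 0 < γb) (hbt : γb < γt) (hγt : γt < 1) (hα : 0 < α) (hβ : 0 < β)
    (hp0 : γb/2 ≤ p0) (hp1 : γt/2 ≤ p1) (hp1u : p1 ≤ (1+γt)/2)
    (hδ : 0 < p1 - p0)
    (hF4 : (p1-p0)*γt ≤ (γt-γb)*p1)
    (hK : (2-γb+γb*γt)/(γb*γt) * α < β) :
    -((1-γb)*α+γb*β) * ((Real.log p0 - Real.log p1) - (Real.log (1-p0) - Real.log (1-p1)))
        + -((1-γt)*α+γt*β) * ((p1 - p0)/(p1*(1-p1))) < 0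
    ∧ -((1-γt)*α+γt*β) * ((Real.log p1 - Real.log p0) - (Real.log (1-p1) - Real.log (1-p0)))
        + -((1-γb)*α+γb*β) * ((p0 - p1)/(p0*(1-p0))) < 0 := by
  have hp0pos : 0 < p0 := lt_of_lt_of_le (by linarith) hp0
  have hp1lt1 : p1 < 1 := by linarith
  have hp01 : p0 < p1 := by linarith
  have hlb1 := logBounds hp0pos hp01 hp1lt1
  have hlb2 := logBounds (show 0 < 1 - p1 by linarith)
    (show 1 - p1 < 1 - p0 by linarith) (show 1 - p0 < 1 by linarith)
  have e2 : (1 - p0) - (1 - p1) = p1 - p0 := by ring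
  rw [e2] at hlb2
  have hcore := coreNeg γb γt α β p0 p1 (Real.log p1 - Real.log p0)
    (Real.log (1-p0) - Real.log (1-p1)) hγb hbt hγt hα hβ hp0 hp1 hp1u hδ hF4
    hlb1.1 hlb2.1 hlb1.2 hlb2.2 hK
  constructor
  · have heq : ((1-γb)*α+γb*β) * ((Real.log p1 - Real.log p0) + (Real.log (1-p0) - Real.log (1-p1)))
        - ((1-γt)*α+γt*β) * ((p1-p0)/(p1*(1-p1)))
      = -((1-γb)*α+γb*β) * ((Real.log p0 - Real.log p1) - (Real.log (1-p0) - Real.log (1-p1)))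
        + -((1-γt)*α+γt*β) * ((p1 - p0)/(p1*(1-p1))) := by ring
    linarith [hcore.1, heq]
  · have heq : ((1-γb)*α+γb*β) * ((p1-p0)/(p0*(1-p0)))
        - ((1-γt)*α+γt*β) * ((Real.log p1 - Real.log p0) + (Real.log (1-p0) - Real.log (1-p1)))
      = -((1-γt)*α+γt*β) * ((Real.log p1 - Real.log p0) - (Real.log (1-p1) - Real.log (1-p0)))
        + -((1-γb)*α+γb*β) * ((p0 - p1)/(p0*(1-p0))) := by ring
    linarith [hcore.2, heq]

noncomputable def alphaF (σ0 x : ℝ) : ℝ := gpdf (x/σ0) * (1/σ0)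
noncomputable def betaF (Ae σ0 σ x : ℝ) : ℝ :=
  gpdf ((x-Ae)/Real.sqrt (σ0^2+σ^2)) * (1/Real.sqrt (σ0^2+σ^2))

lemma alphaF_pos {σ0 : ℝ} (h : 0 < σ0) (x : ℝ) : 0 < alphaF σ0 x :=
  mul_pos (gpdf_pos _) (by positivity)

lemma betaF_pos {Ae σ0 σ : ℝ} (h0 : 0 < σ0) (x : ℝ) : 0 < betaF Ae σ0 σ x := by
  have : (0:ℝ) < Real.sqrt (σ0^2+σ^2) := Real.sqrt_pos.2 (by positivity)
  exact mul_pos (gpdf_pos _) (by positivity)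

lemma pCross_pos {γ Ae σ0 σ : ℝ} (h0 : 0 < γ) (h1 : γ < 1) (z : ℝ) :
    0 < pCross γ Ae σ0 σ z := by
  unfold pCross
  nlinarith [gaussQ_pos (z/σ0), gaussQ_pos ((z-Ae)/Real.sqrt (σ0^2+σ^2))]

lemma pCross_lt_one {γ Ae σ0 σ : ℝ} (h0 : 0 < γ) (h1 : γ < 1) (z : ℝ) :
    pCross γ Ae σ0 σ z < 1 := by
  unfold pCross
  nlinarith [gaussQ_lt_one (z/σ0), gaussQ_lt_one ((z-Ae)/Real.sqrt (σ0^2+σ^2))]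

lemma pCross_hasDerivAt (γ Ae σ0 σ : ℝ) (hσ0 : 0 < σ0) (x : ℝ) :
    HasDerivAt (fun z => pCross γ Ae σ0 σ z)
      (-((1-γ) * alphaF σ0 x + γ * betaF Ae σ0 σ x)) x := by
  have hsq : (0:ℝ) < Real.sqrt (σ0^2+σ^2) := Real.sqrt_pos.2 (by positivity)
  have h1 : HasDerivAt (fun z : ℝ => z / σ0) (1/σ0) x := by
    simpa using (hasDerivAt_id x).div_const σ0
  have h2 : HasDerivAt (fun z : ℝ => gaussQ (z/σ0)) (-gpdf (x/σ0) * (1/σ0)) x :=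
    (gaussQ_hasDerivAt _).comp x h1
  have h3 : HasDerivAt (fun z : ℝ => (z - Ae) / Real.sqrt (σ0^2+σ^2))
      (1/Real.sqrt (σ0^2+σ^2)) x := by
    simpa using ((hasDerivAt_id x).sub_const Ae).div_const (Real.sqrt (σ0^2+σ^2))
  have h4 : HasDerivAt (fun z : ℝ => gaussQ ((z-Ae)/Real.sqrt (σ0^2+σ^2)))
      (-gpdf ((x-Ae)/Real.sqrt (σ0^2+σ^2)) * (1/Real.sqrt (σ0^2+σ^2))) x :=
    (gaussQ_hasDerivAt _).comp x h3
  have h5 := (h2.const_mul (1-γ)).add (h4.const_mul γ)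
  refine h5.congr_deriv ?_
  unfold alphaF betaF
  ring

lemma klBer_hasDerivAt {P Q : ℝ → ℝ} {P' Q' : ℝ} (z : ℝ)
    (hP : HasDerivAt P P' z) (hQ : HasDerivAt Q Q' z)
    (h0P : ∀ y, 0 < P y) (h1P : ∀ y, P y < 1) (h0Q : ∀ y, 0 < Q y) (h1Q : ∀ y, Q y < 1) :
    HasDerivAt (fun y => klBer (P y) (Q y))
      (P' * ((Real.log (P z) - Real.log (Q z)) - (Real.log (1 - P z) - Real.log (1 - Q z)))
        + Q' * ((Q z - P z) / (Q z * (1 - Q z)))) z := by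
  have hfe : (fun y => klBer (P y) (Q y))
      = fun y => P y * (Real.log (P y) - Real.log (Q y))
          + (1 - P y) * (Real.log (1 - P y) - Real.log (1 - Q y)) := by
    funext y
    unfold klBer
    rw [Real.log_div (h0P y).ne' (h0Q y).ne',
      Real.log_div (by linarith [h1P y]) (by linarith [h1Q y])]
  rw [hfe]
  have hlogP : HasDerivAt (fun y => Real.log (P y)) (P' / P z) z := hP.log (h0P z).ne'
  have hlogQ : HasDerivAt (fun y => Real.log (Q y)) (Q' / Q z) z := hQ.log (h0Q z).ne'
  have h1mP : HasDerivAt (fun y => 1 - P y) (-P') z := hP.const_sub 1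
  have h1mQ : HasDerivAt (fun y => 1 - Q y) (-Q') z := hQ.const_sub 1
  have hlog1P : HasDerivAt (fun y => Real.log (1 - P y)) (-P' / (1 - P z)) z :=
    h1mP.log (by linarith [h1P z])
  have hlog1Q : HasDerivAt (fun y => Real.log (1 - Q y)) (-Q' / (1 - Q z)) z :=
    h1mQ.log (by linarith [h1Q z])
  have hA := hP.mul (hlogP.sub hlogQ)
  have hB := h1mP.mul (hlog1P.sub hlog1Q)
  have h := hA.add hB
  refine h.congr_deriv ?_
  simp only [Pi.sub_apply]
  have e1 : P z ≠ 0 := (h0P z).ne'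
  have e2 : Q z ≠ 0 := (h0Q z).ne'
  have e3 : (1:ℝ) - P z ≠ 0 := by linarith [h1P z]
  have e4 : (1:ℝ) - Q z ≠ 0 := by linarith [h1Q z]
  field_simp
  ring

/-- The exponent comparison function. -/
noncomputable def Efun (Ae σ σ0 z : ℝ) : ℝ := (z - Ae)^2/(σ^2+σ0^2) - z^2/σ0^2

lemma Efun_anti {Ae σ σ0 z1 z2 : ℝ} (hσ : 0 < σ) (hσ0 : 0 < σ0) (hAe : 0 < Ae)
    (h1 : 0 ≤ z1) (h12 : z1 < z2) : Efun Ae σ σ0 z2 < Efun Ae σ σ0 z1 := by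
  have hs : (0:ℝ) < σ^2+σ0^2 := by positivity
  have hid : Efun Ae σ σ0 z1 - Efun Ae σ σ0 z2
      = (z2 - z1) * ((z1+z2) * (1/σ0^2 - 1/(σ^2+σ0^2)) + 2*Ae/(σ^2+σ0^2)) := by
    unfold Efun; field_simp; try ring
  have hd : 0 < 1/σ0^2 - 1/(σ^2+σ0^2) := by
    rw [show 1/σ0^2 - 1/(σ^2+σ0^2) = σ^2/(σ0^2*(σ^2+σ0^2)) by field_simp; try ring]
    positivity
  have hb : 0 < (z1+z2) * (1/σ0^2 - 1/(σ^2+σ0^2)) + 2*Ae/(σ^2+σ0^2) := by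
    have hb1 : 0 ≤ (z1+z2) * (1/σ0^2 - 1/(σ^2+σ0^2)) := mul_nonneg (by linarith) hd.le
    have hb2 : 0 < 2*Ae/(σ^2+σ0^2) := by positivity
    linarith
  linarith [hid, mul_pos (show (0:ℝ) < z2 - z1 by linarith) hb]

/-- value of Efun at the threshold point Z(C). -/
lemma Efun_Zfun (Ae σ σ0 C : ℝ) (hσ : 0 < σ) (hσ0 : 0 < σ0)
    (hrad : 0 ≤ Zrad Ae σ σ0 C) :
    Efun Ae σ σ0 (Zfun Ae σ σ0 C)
      = 2 * Real.log (C * σ0 / Real.sqrt (σ ^ 2 + σ0 ^ 2)) := by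
  have hs : (0:ℝ) < σ^2+σ0^2 := by positivity
  have hd : 0 < 1/σ0^2 - 1/(σ^2+σ0^2) := by
    rw [show 1/σ0^2 - 1/(σ^2+σ0^2) = σ^2/(σ0^2*(σ^2+σ0^2)) by field_simp; try ring]
    positivity
  set L := Real.log (C * σ0 / Real.sqrt (σ ^ 2 + σ0 ^ 2)) with hL
  set r := Real.sqrt (Zrad Ae σ σ0 C) with hr
  have hr2 : r^2 = Ae ^ 2 / (σ ^ 2 + σ0 ^ 2) ^ 2 -
      (1 / (σ ^ 2 + σ0 ^ 2) - 1 / σ0 ^ 2) * (Ae ^ 2 / (σ ^ 2 + σ0 ^ 2) - 2 * L) := by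
    rw [hr]; rw [Real.sq_sqrt hrad]; rfl
  have hZ : Zfun Ae σ σ0 C = (-(Ae/(σ^2+σ0^2)) + r) / (1/σ0^2 - 1/(σ^2+σ0^2)) := rfl
  set d := 1/σ0^2 - 1/(σ^2+σ0^2) with hdd
  set Z := Zfun Ae σ σ0 C with hZZ
  have h1 : Z * d = -(Ae/(σ^2+σ0^2)) + r := by
    rw [hZ]; field_simp
  have h2 : Efun Ae σ σ0 Z = -(d*Z^2) - 2*(Ae/(σ^2+σ0^2))*Z + Ae^2/(σ^2+σ0^2) := by
    unfold Efun
    rw [hdd]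
    field_simp
    ring
  have h4 : -(Z*d)^2 - 2*(Ae/(σ^2+σ0^2))*(Z*d) + d*(Ae^2/(σ^2+σ0^2) - 2*L) = 0 := by
    rw [h1]
    have : (Ae/(σ^2+σ0^2))^2 = Ae^2/(σ^2+σ0^2)^2 := by rw [div_pow]
    nlinarith [hr2]
  have h5 : d * (Efun Ae σ σ0 Z) = d * (2*L) := by
    rw [h2]; nlinarith [h4]
  exact mul_left_cancel₀ hd.ne' h5

lemma gpdf_ratio (Ae σ σ0 x : ℝ) (hσ : 0 < σ) (hσ0 : 0 < σ0) :
    gpdf (x/σ0) = gpdf ((x-Ae)/Real.sqrt (σ0^2+σ^2)) * Real.exp (Efun Ae σ σ0 x / 2) := by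
  have hs : (0:ℝ) < σ0^2+σ^2 := by positivity
  unfold gpdf Efun
  rw [mul_assoc, ← Real.exp_add]
  congr 2
  rw [div_pow, div_pow, Real.sq_sqrt hs.le]
  field_simp
  ring

lemma ratio_gt (Ae σ σ0 C x : ℝ) (hσ : 0 < σ) (hσ0 : 0 < σ0) (hC : 0 < C)
    (hE : 2 * Real.log (C * σ0 / Real.sqrt (σ^2+σ0^2)) < Efun Ae σ σ0 x) :
    C * betaF Ae σ0 σ x < alphaF σ0 x := by
  have hs : (0:ℝ) < σ0^2+σ^2 := by positivity
  have hsq : (0:ℝ) < Real.sqrt (σ0^2+σ^2) := Real.sqrt_pos.2 hs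
  have hswap : Real.sqrt (σ^2+σ0^2) = Real.sqrt (σ0^2+σ^2) := by rw [add_comm]
  rw [hswap] at hE
  have hG : 0 < gpdf ((x-Ae)/Real.sqrt (σ0^2+σ^2)) := gpdf_pos _
  have hexp : C * σ0 / Real.sqrt (σ0^2+σ^2) < Real.exp (Efun Ae σ σ0 x / 2) := by
    have h1 : Real.log (C * σ0 / Real.sqrt (σ0^2+σ^2)) < Efun Ae σ σ0 x / 2 := by linarith
    calc C * σ0 / Real.sqrt (σ0^2+σ^2)
        = Real.exp (Real.log (C * σ0 / Real.sqrt (σ0^2+σ^2))) := (Real.exp_log (by positivity)).symm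
      _ < Real.exp (Efun Ae σ σ0 x / 2) := Real.exp_lt_exp.2 h1
  unfold alphaF betaF
  rw [gpdf_ratio Ae σ σ0 x hσ hσ0]
  have hmul := mul_lt_mul_of_pos_left hexp
    (show 0 < gpdf ((x-Ae)/Real.sqrt (σ0^2+σ^2)) * (1/σ0) by positivity)
  have e1 : gpdf ((x-Ae)/Real.sqrt (σ0^2+σ^2)) * (1/σ0) * (C * σ0 / Real.sqrt (σ0^2+σ^2))
      = C * (gpdf ((x-Ae)/Real.sqrt (σ0^2+σ^2)) * (1/Real.sqrt (σ0^2+σ^2))) := by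
    field_simp
  have e2 : gpdf ((x-Ae)/Real.sqrt (σ0^2+σ^2)) * (1/σ0) * Real.exp (Efun Ae σ σ0 x / 2)
      = gpdf ((x-Ae)/Real.sqrt (σ0^2+σ^2)) * Real.exp (Efun Ae σ σ0 x / 2) * (1/σ0) := by
    ring
  linarith [hmul, e1, e2]

lemma ratio_lt (Ae σ σ0 C x : ℝ) (hσ : 0 < σ) (hσ0 : 0 < σ0) (hC : 0 < C)
    (hE : Efun Ae σ σ0 x < 2 * Real.log (C * σ0 / Real.sqrt (σ^2+σ0^2))) :
    alphaF σ0 x < C * betaF Ae σ0 σ x := by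
  have hs : (0:ℝ) < σ0^2+σ^2 := by positivity
  have hsq : (0:ℝ) < Real.sqrt (σ0^2+σ^2) := Real.sqrt_pos.2 hs
  have hswap : Real.sqrt (σ^2+σ0^2) = Real.sqrt (σ0^2+σ^2) := by rw [add_comm]
  rw [hswap] at hE
  have hG : 0 < gpdf ((x-Ae)/Real.sqrt (σ0^2+σ^2)) := gpdf_pos _
  have hexp : Real.exp (Efun Ae σ σ0 x / 2) < C * σ0 / Real.sqrt (σ0^2+σ^2) := by
    have h1 : Efun Ae σ σ0 x / 2 < Real.log (C * σ0 / Real.sqrt (σ0^2+σ^2)) := by linarith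
    calc Real.exp (Efun Ae σ σ0 x / 2)
        < Real.exp (Real.log (C * σ0 / Real.sqrt (σ0^2+σ^2))) := Real.exp_lt_exp.2 h1
      _ = C * σ0 / Real.sqrt (σ0^2+σ^2) := Real.exp_log (by positivity)
  unfold alphaF betaF
  rw [gpdf_ratio Ae σ σ0 x hσ hσ0]
  have hmul := mul_lt_mul_of_pos_left hexp
    (show 0 < gpdf ((x-Ae)/Real.sqrt (σ0^2+σ^2)) * (1/σ0) by positivity)
  have e1 : gpdf ((x-Ae)/Real.sqrt (σ0^2+σ^2)) * (1/σ0) * (C * σ0 / Real.sqrt (σ0^2+σ^2))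
      = C * (gpdf ((x-Ae)/Real.sqrt (σ0^2+σ^2)) * (1/Real.sqrt (σ0^2+σ^2))) := by
    field_simp
  have e2 : gpdf ((x-Ae)/Real.sqrt (σ0^2+σ^2)) * (1/σ0) * Real.exp (Efun Ae σ σ0 x / 2)
      = gpdf ((x-Ae)/Real.sqrt (σ0^2+σ^2)) * Real.exp (Efun Ae σ σ0 x / 2) * (1/σ0) := by
    ring
  linarith [hmul, e1, e2]

theorem stmt_19 (γb γt Ae : ℝ)
    (hγb : 0 < γb) (hγbt : γb < γt) (hγt : γt < 1) (hAe : 0 < Ae) :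
    ∃ Cl Cu : ℝ, 0 < Cl ∧ 0 < Cu ∧
      ∀ σ σ0 : ℝ, 0 < σ → 0 < σ0 →
        0 ≤ Zrad Ae σ σ0 Cl → 0 ≤ Zrad Ae σ σ0 Cu →
        Zfun Ae σ σ0 Cl ∈ Set.Icc 0 Ae → Zfun Ae σ σ0 Cu ∈ Set.Icc 0 Ae →
        ∀ zhat ∈ Set.Icc (0 : ℝ) Ae,
          IsMaxOn (fun z : ℝ =>
              min (klBer (pCross γb Ae σ0 σ z) (pCross γt Ae σ0 σ z))
                (klBer (pCross γt Ae σ0 σ z) (pCross γb Ae σ0 σ z)))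
            (Set.Icc 0 Ae) zhat →
          Zfun Ae σ σ0 Cl ≤ zhat ∧ zhat ≤ Zfun Ae σ σ0 Cu := by
  have hγt0 : 0 < γt := lt_trans hγb hγbt
  have hγb1 : γb < 1 := lt_trans hγbt hγt
  have hClpos : (0:ℝ) < (2-γt+γt^2)/(1-γt)^2 :=
    div_pos (by nlinarith) (by nlinarith)
  have hKupos : (0:ℝ) < (2-γb+γb*γt)/(γb*γt) :=
    div_pos (by nlinarith) (by positivity)
  refine ⟨(2-γt+γt^2)/(1-γt)^2, ((2-γb+γb*γt)/(γb*γt))⁻¹, hClpos, inv_pos.2 hKupos, ?_⟩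
  intro σ σ0 hσ hσ0 hradl hradu hZlmem hZumem zhat hzhatmem hmax
  obtain ⟨hZl0, hZlA⟩ := hZlmem
  obtain ⟨hZu0, hZuA⟩ := hZumem
  obtain ⟨hzh0, hzhA⟩ := hzhatmem
  have hP0pos : ∀ y, 0 < pCross γb Ae σ0 σ y := fun y => pCross_pos hγb hγb1 y
  have hP0lt : ∀ y, pCross γb Ae σ0 σ y < 1 := fun y => pCross_lt_one hγb hγb1 y
  have hP1pos : ∀ y, 0 < pCross γt Ae σ0 σ y := fun y => pCross_pos hγt0 hγt y
  have hP1lt : ∀ y, pCross γt Ae σ0 σ y < 1 := fun y => pCross_lt_one hγt0 hγt y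
  have hAd := fun x : ℝ => klBer_hasDerivAt x
    (pCross_hasDerivAt γb Ae σ0 σ hσ0 x) (pCross_hasDerivAt γt Ae σ0 σ hσ0 x)
    hP0pos hP0lt hP1pos hP1lt
  have hBd := fun x : ℝ => klBer_hasDerivAt x
    (pCross_hasDerivAt γt Ae σ0 σ hσ0 x) (pCross_hasDerivAt γb Ae σ0 σ hσ0 x)
    hP1pos hP1lt hP0pos hP0lt
  have hAc : Continuous (fun z => klBer (pCross γb Ae σ0 σ z) (pCross γt Ae σ0 σ z)) :=
    continuous_iff_continuousAt.2 fun x => (hAd x).continuousAt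
  have hBc : Continuous (fun z => klBer (pCross γt Ae σ0 σ z) (pCross γb Ae σ0 σ z)) :=
    continuous_iff_continuousAt.2 fun x => (hBd x).continuousAt
  have hsq : (0:ℝ) < Real.sqrt (σ0^2+σ^2) := Real.sqrt_pos.2 (by positivity)
  have hfacts : ∀ x, 0 < x → x < Ae →
      γb/2 ≤ pCross γb Ae σ0 σ x ∧ γt/2 ≤ pCross γt Ae σ0 σ x
      ∧ pCross γt Ae σ0 σ x ≤ (1+γt)/2
      ∧ 0 < pCross γt Ae σ0 σ x - pCross γb Ae σ0 σ x
      ∧ (pCross γt Ae σ0 σ x - pCross γb Ae σ0 σ x)*(1-γt) ≤ (γt-γb)*(1-pCross γt Ae σ0 σ x)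
      ∧ (pCross γt Ae σ0 σ x - pCross γb Ae σ0 σ x)*γt ≤ (γt-γb)*pCross γt Ae σ0 σ x := by
    intro x hx0 hxA
    have harg : (x-Ae)/Real.sqrt (σ0^2+σ^2) ≤ 0 :=
      div_nonpos_of_nonpos_of_nonneg (by linarith) hsq.le
    have harg2 : 0 < x/σ0 := by positivity
    have hQ0h : gaussQ (x/σ0) ≤ 1/2 := gaussQ_le_half (by positivity)
    have hQ1h : 1/2 ≤ gaussQ ((x-Ae)/Real.sqrt (σ0^2+σ^2)) := half_le_gaussQ harg
    have hQlt : gaussQ (x/σ0) < gaussQ ((x-Ae)/Real.sqrt (σ0^2+σ^2)) :=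
      gaussQ_strict_anti (lt_of_le_of_lt harg harg2)
    have hQ0pos : 0 < gaussQ (x/σ0) := gaussQ_pos _
    have hQ1lt1 : gaussQ ((x-Ae)/Real.sqrt (σ0^2+σ^2)) < 1 := gaussQ_lt_one _
    refine ⟨?_, ?_, ?_, ?_, ?_, ?_⟩ <;> unfold pCross <;> nlinarith
  have hEl := Efun_Zfun Ae σ σ0 ((2-γt+γt^2)/(1-γt)^2) hσ hσ0 hradl
  have hEu := Efun_Zfun Ae σ σ0 (((2-γb+γb*γt)/(γb*γt))⁻¹) hσ hσ0 hradu
  constructor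
  · by_contra hcon
    push_neg at hcon
    have hmonA : StrictMonoOn (fun z => klBer (pCross γb Ae σ0 σ z) (pCross γt Ae σ0 σ z))
        (Set.Icc zhat (Zfun Ae σ σ0 ((2-γt+γt^2)/(1-γt)^2))) := by
      apply strictMonoOn_of_deriv_pos (convex_Icc _ _) hAc.continuousOn
      intro x hx
      rw [interior_Icc] at hx
      have hx0 : 0 < x := lt_of_le_of_lt hzh0 hx.1
      have hxA : x < Ae := lt_of_lt_of_le hx.2 hZlA
      obtain ⟨f1, f2, f3, f4, f5, f6⟩ := hfacts x hx0 hxA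
      have hEx : 2 * Real.log ((2-γt+γt^2)/(1-γt)^2 * σ0 / Real.sqrt (σ^2+σ0^2))
          < Efun Ae σ σ0 x := by
        rw [← hEl]; exact Efun_anti hσ hσ0 hAe hx0.le hx.2
      have hK := ratio_gt Ae σ σ0 _ x hσ hσ0 hClpos hEx
      rw [(hAd x).deriv]
      exact (corePosD γb γt (alphaF σ0 x) (betaF Ae σ0 σ x)
        (pCross γb Ae σ0 σ x) (pCross γt Ae σ0 σ x) hγb hγbt hγt
        (alphaF_pos hσ0 x) (betaF_pos hσ0 x) f1 f2 f3 f4 f5 hK).1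
    have hmonB : StrictMonoOn (fun z => klBer (pCross γt Ae σ0 σ z) (pCross γb Ae σ0 σ z))
        (Set.Icc zhat (Zfun Ae σ σ0 ((2-γt+γt^2)/(1-γt)^2))) := by
      apply strictMonoOn_of_deriv_pos (convex_Icc _ _) hBc.continuousOn
      intro x hx
      rw [interior_Icc] at hx
      have hx0 : 0 < x := lt_of_le_of_lt hzh0 hx.1
      have hxA : x < Ae := lt_of_lt_of_le hx.2 hZlA
      obtain ⟨f1, f2, f3, f4, f5, f6⟩ := hfacts x hx0 hxA
      have hEx : 2 * Real.log ((2-γt+γt^2)/(1-γt)^2 * σ0 / Real.sqrt (σ^2+σ0^2))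
          < Efun Ae σ σ0 x := by
        rw [← hEl]; exact Efun_anti hσ hσ0 hAe hx0.le hx.2
      have hK := ratio_gt Ae σ σ0 _ x hσ hσ0 hClpos hEx
      rw [(hBd x).deriv]
      exact (corePosD γb γt (alphaF σ0 x) (betaF Ae σ0 σ x)
        (pCross γb Ae σ0 σ x) (pCross γt Ae σ0 σ x) hγb hγbt hγt
        (alphaF_pos hσ0 x) (betaF_pos hσ0 x) f1 f2 f3 f4 f5 hK).2
    have hmem1 : zhat ∈ Set.Icc zhat (Zfun Ae σ σ0 ((2-γt+γt^2)/(1-γt)^2)) :=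
      ⟨le_rfl, hcon.le⟩
    have hmem2 : Zfun Ae σ σ0 ((2-γt+γt^2)/(1-γt)^2)
        ∈ Set.Icc zhat (Zfun Ae σ σ0 ((2-γt+γt^2)/(1-γt)^2)) := ⟨hcon.le, le_rfl⟩
    have h1 := hmonA hmem1 hmem2 hcon
    have h2 := hmonB hmem1 hmem2 hcon
    have hle := hmax (Set.mem_Icc.mpr ⟨hZl0, hZlA⟩)
    simp only at hle h1 h2
    have hlt : min (klBer (pCross γb Ae σ0 σ zhat) (pCross γt Ae σ0 σ zhat))
          (klBer (pCross γt Ae σ0 σ zhat) (pCross γb Ae σ0 σ zhat))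
        < min (klBer (pCross γb Ae σ0 σ (Zfun Ae σ σ0 ((2-γt+γt^2)/(1-γt)^2)))
            (pCross γt Ae σ0 σ (Zfun Ae σ σ0 ((2-γt+γt^2)/(1-γt)^2))))
          (klBer (pCross γt Ae σ0 σ (Zfun Ae σ σ0 ((2-γt+γt^2)/(1-γt)^2)))
            (pCross γb Ae σ0 σ (Zfun Ae σ σ0 ((2-γt+γt^2)/(1-γt)^2)))) :=
      lt_min (lt_of_le_of_lt (min_le_left _ _) h1) (lt_of_le_of_lt (min_le_right _ _) h2)
    exact absurd hle (not_le.mpr hlt)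
  · by_contra hcon
    push_neg at hcon
    have hantA : StrictAntiOn (fun z => klBer (pCross γb Ae σ0 σ z) (pCross γt Ae σ0 σ z))
        (Set.Icc (Zfun Ae σ σ0 (((2-γb+γb*γt)/(γb*γt))⁻¹)) zhat) := by
      apply strictAntiOn_of_deriv_neg (convex_Icc _ _) hAc.continuousOn
      intro x hx
      rw [interior_Icc] at hx
      have hx0 : 0 < x := lt_of_le_of_lt hZu0 hx.1
      have hxA : x < Ae := lt_of_lt_of_le hx.2 hzhA
      obtain ⟨f1, f2, f3, f4, f5, f6⟩ := hfacts x hx0 hxA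
      have hEx : Efun Ae σ σ0 x
          < 2 * Real.log (((2-γb+γb*γt)/(γb*γt))⁻¹ * σ0 / Real.sqrt (σ^2+σ0^2)) := by
        rw [← hEu]; exact Efun_anti hσ hσ0 hAe hZu0 hx.1
      have hK' := ratio_lt Ae σ σ0 _ x hσ hσ0 (inv_pos.2 hKupos) hEx
      have hK : (2-γb+γb*γt)/(γb*γt) * alphaF σ0 x < betaF Ae σ0 σ x := by
        have h := mul_lt_mul_of_pos_left hK' hKupos
        have e : (2-γb+γb*γt)/(γb*γt) * (((2-γb+γb*γt)/(γb*γt))⁻¹ * betaF Ae σ0 σ x)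
            = betaF Ae σ0 σ x := by
          rw [← mul_assoc, mul_inv_cancel₀ hKupos.ne', one_mul]
        linarith [h, e]
      rw [(hAd x).deriv]
      exact (coreNegD γb γt (alphaF σ0 x) (betaF Ae σ0 σ x)
        (pCross γb Ae σ0 σ x) (pCross γt Ae σ0 σ x) hγb hγbt hγt
        (alphaF_pos hσ0 x) (betaF_pos hσ0 x) f1 f2 f3 f4 f6 hK).1
    have hantB : StrictAntiOn (fun z => klBer (pCross γt Ae σ0 σ z) (pCross γb Ae σ0 σ z))
        (Set.Icc (Zfun Ae σ σ0 (((2-γb+γb*γt)/(γb*γt))⁻¹)) zhat) := by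
      apply strictAntiOn_of_deriv_neg (convex_Icc _ _) hBc.continuousOn
      intro x hx
      rw [interior_Icc] at hx
      have hx0 : 0 < x := lt_of_le_of_lt hZu0 hx.1
      have hxA : x < Ae := lt_of_lt_of_le hx.2 hzhA
      obtain ⟨f1, f2, f3, f4, f5, f6⟩ := hfacts x hx0 hxA
      have hEx : Efun Ae σ σ0 x
          < 2 * Real.log (((2-γb+γb*γt)/(γb*γt))⁻¹ * σ0 / Real.sqrt (σ^2+σ0^2)) := by
        rw [← hEu]; exact Efun_anti hσ hσ0 hAe hZu0 hx.1
      have hK' := ratio_lt Ae σ σ0 _ x hσ hσ0 (inv_pos.2 hKupos) hEx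
      have hK : (2-γb+γb*γt)/(γb*γt) * alphaF σ0 x < betaF Ae σ0 σ x := by
        have h := mul_lt_mul_of_pos_left hK' hKupos
        have e : (2-γb+γb*γt)/(γb*γt) * (((2-γb+γb*γt)/(γb*γt))⁻¹ * betaF Ae σ0 σ x)
            = betaF Ae σ0 σ x := by
          rw [← mul_assoc, mul_inv_cancel₀ hKupos.ne', one_mul]
        linarith [h, e]
      rw [(hBd x).deriv]
      exact (coreNegD γb γt (alphaF σ0 x) (betaF Ae σ0 σ x)
        (pCross γb Ae σ0 σ x) (pCross γt Ae σ0 σ x) hγb hγbt hγt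
        (alphaF_pos hσ0 x) (betaF_pos hσ0 x) f1 f2 f3 f4 f6 hK).2
    have hmem1 : Zfun Ae σ σ0 (((2-γb+γb*γt)/(γb*γt))⁻¹)
        ∈ Set.Icc (Zfun Ae σ σ0 (((2-γb+γb*γt)/(γb*γt))⁻¹)) zhat := ⟨le_rfl, hcon.le⟩
    have hmem2 : zhat ∈ Set.Icc (Zfun Ae σ σ0 (((2-γb+γb*γt)/(γb*γt))⁻¹)) zhat :=
      ⟨hcon.le, le_rfl⟩
    have h1 := hantA hmem1 hmem2 hcon
    have h2 := hantB hmem1 hmem2 hcon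
    have hle := hmax (Set.mem_Icc.mpr ⟨hZu0, hZuA⟩)
    simp only at hle h1 h2
    have hlt : min (klBer (pCross γb Ae σ0 σ zhat) (pCross γt Ae σ0 σ zhat))
          (klBer (pCross γt Ae σ0 σ zhat) (pCross γb Ae σ0 σ zhat))
        < min (klBer (pCross γb Ae σ0 σ (Zfun Ae σ σ0 (((2-γb+γb*γt)/(γb*γt))⁻¹)))
            (pCross γt Ae σ0 σ (Zfun Ae σ σ0 (((2-γb+γb*γt)/(γb*γt))⁻¹))))
          (klBer (pCross γt Ae σ0 σ (Zfun Ae σ σ0 (((2-γb+γb*γt)/(γb*γt))⁻¹)))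
            (pCross γb Ae σ0 σ (Zfun Ae σ σ0 (((2-γb+γb*γt)/(γb*γt))⁻¹)))) :=
      lt_min (lt_of_le_of_lt (min_le_left _ _) h1) (lt_of_le_of_lt (min_le_right _ _) h2)
    exact absurd hle (not_le.mpr hlt)
end
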